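/- Assume J is anti-coercive on E, J is C¹, and there exists c < λ·min_k p(k) with max_{k∈Z[1,N]} lim_{u→0} f(k,u)/u ≤ c (the limits exist). Then there exists δ > 0 such that J(x) ≥ ((λ·min_k p(k) − c)/4)·‖x‖² for all x with ‖x‖ ≤ δ; in particular J(x) > 0 = J(0) on the sphere ‖x‖ = δ. -/

import Mathlib

open Finset

/-- forward difference operator -/
def dd (x : ℤ → ℝ) : ℤ → ℝ := fun i => x (i + 1) - x i

/-- extension of `v : Fin N → ℝ` to a function on `ℤ` supported on `Z[1,N]`
(thus vanishing on `Z[1-n,0] ∪ Z[N+1,N+n]`); this realizes the space `E`. -/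
noncomputable def extendE (N : ℕ) (v : Fin N → ℝ) : ℤ → ℝ := fun i =>
  if h : 0 ≤ i - 1 ∧ (i - 1).toNat < N then v ⟨(i - 1).toNat, h.2⟩ else 0

/-- the norm of the space `E`: `‖x‖ = (∑_{k=1}^N x(k)²)^{1/2}` -/
noncomputable def normE (N : ℕ) (v : Fin N → ℝ) : ℝ :=
  Real.sqrt (∑ k ∈ Finset.Icc (1 : ℤ) (N : ℤ), (extendE N v k) ^ 2)

/-- `F(k,s) = ∫₀ˢ f(k,t) dt` -/
noncomputable def Ffun (f : ℤ → ℝ → ℝ) (k : ℤ) (s : ℝ) : ℝ := ∫ t in (0 : ℝ)..s, f k t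

/-- the action functional `J` -/
noncomputable def Jfun (n N : ℕ) (p : ℤ → ℝ) (F : ℤ → ℝ → ℝ) (v : Fin N → ℝ) : ℝ :=
  ∑ k ∈ Finset.Icc (1 - (n : ℤ)) (N : ℤ),
    ((1 / 2 : ℝ) * p k * (dd^[n] (extendE N v) k) ^ 2 - F k (extendE N v k))

/-- `v` solves the discrete BVP
`Δⁿ(p(k-n)Δⁿx(k-n)) + (-1)^{n+1} f(k,x(k)) = 0`, `k ∈ Z[1,N]`,
with the Dirichlet boundary conditions built into `extendE`. -/
def Solves (n N : ℕ) (p : ℤ → ℝ) (f : ℤ → ℝ → ℝ) (v : Fin N → ℝ) : Prop :=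
  ∀ k ∈ Finset.Icc (1 : ℤ) (N : ℤ),
    dd^[n] (fun j => p j * dd^[n] (extendE N v) j) (k - n)
      + (-1 : ℝ) ^ (n + 1) * f k (extendE N v k) = 0

/-- coercivity: `J(x) → +∞` as `‖x‖ → ∞` -/
def CoerciveE (N : ℕ) (J : (Fin N → ℝ) → ℝ) : Prop :=
  ∀ C : ℝ, ∃ R : ℝ, ∀ v : Fin N → ℝ, R ≤ normE N v → C ≤ J v

/-- anti-coercivity: `J(x) → −∞` as `‖x‖ → ∞` -/
def AntiCoerciveE (N : ℕ) (J : (Fin N → ℝ) → ℝ) : Prop :=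
  ∀ C : ℝ, ∃ R : ℝ, ∀ v : Fin N → ℝ, R ≤ normE N v → J v ≤ C


lemma int_bound (g : ℝ → ℝ) (hg : Continuous g) (hg0 : g 0 = 0) (M δ s : ℝ)
    (hs : |s| ≤ δ) (hb : ∀ u : ℝ, u ≠ 0 → |u| ≤ δ → g u / u ≤ M) :
    ∫ t in (0:ℝ)..s, g t ≤ M / 2 * s ^ 2 := by
  rcases lt_trichotomy s 0 with h | h | h
  · have hle : ∀ t ∈ Set.Icc s (0:ℝ), M * t ≤ g t := by
      intro t ht
      rcases eq_or_lt_of_le ht.2 with h0 | h0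
      · simp [h0, hg0]
      · have ht0 : t ≠ 0 := ne_of_lt h0
        have habs : |t| ≤ δ := by
          rw [abs_of_neg h0]
          have := ht.1
          rw [abs_of_neg h] at hs
          linarith
        have := hb t ht0 habs
        exact (div_le_iff_of_neg h0).mp this
    have hint1 : IntervalIntegrable (fun t => M * t) MeasureTheory.volume s 0 :=
      (continuous_const.mul continuous_id).intervalIntegrable s 0
    have hint2 : IntervalIntegrable g MeasureTheory.volume s 0 :=
      hg.intervalIntegrable s 0
    have hmono := intervalIntegral.integral_mono_on (le_of_lt h) hint1 hint2 hle
    have hval : (∫ t in s..(0:ℝ), M * t) = M * ((0:ℝ)^2 - s^2) / 2 := by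
      rw [intervalIntegral.integral_const_mul, integral_id]
      ring
    have hsym : (∫ t in (0:ℝ)..s, g t) = -(∫ t in s..(0:ℝ), g t) := by
      rw [intervalIntegral.integral_symm]
    rw [hsym]
    rw [hval] at hmono
    nlinarith
  · simp [h]
  · have hle : ∀ t ∈ Set.Icc (0:ℝ) s, g t ≤ M * t := by
      intro t ht
      rcases eq_or_lt_of_le ht.1 with h0 | h0
      · simp [← h0, hg0]
      · have ht0 : t ≠ 0 := (ne_of_gt h0)
        have habs : |t| ≤ δ := by
          rw [abs_of_pos h0]
          have := ht.2
          rw [abs_of_pos h] at hs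
          linarith
        have := hb t ht0 habs
        exact (div_le_iff₀ h0).mp this
    have hint1 : IntervalIntegrable (fun t => M * t) MeasureTheory.volume 0 s :=
      (continuous_const.mul continuous_id).intervalIntegrable 0 s
    have hint2 : IntervalIntegrable g MeasureTheory.volume 0 s :=
      hg.intervalIntegrable 0 s
    have hmono := intervalIntegral.integral_mono_on (le_of_lt h) hint2 hint1 hle
    have hval : (∫ t in (0:ℝ)..s, M * t) = M * (s^2 - (0:ℝ)^2) / 2 := by
      rw [intervalIntegral.integral_const_mul, integral_id]
      ring
    rw [hval] at hmono
    nlinarith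

theorem stmt17 (n N : ℕ) (hn : 1 ≤ n) (hN : 2 ≤ N) (p : ℤ → ℝ)
    (f : ℤ → ℝ → ℝ) (hf : ∀ k, Continuous (f k)) (hf0 : ∀ k, f k 0 = 0)
    (lam : ℝ) (hlam : 0 < lam)
    (hpoin : ∀ v : Fin N → ℝ,
      lam * ∑ k ∈ Finset.Icc (1 : ℤ) (N : ℤ), (extendE N v k) ^ 2
        ≤ ∑ k ∈ Finset.Icc (1 - (n : ℤ)) (N : ℤ), (dd^[n] (extendE N v) k) ^ 2)
    (pmin : ℝ) (hpmin : 0 < pmin)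
    (hp : ∀ k ∈ Finset.Icc (1 - (n : ℤ)) (N : ℤ), pmin ≤ p k)
    (hanti : AntiCoerciveE N (Jfun n N p (Ffun f)))
    (hC1 : ContDiff ℝ 1 (Jfun n N p (Ffun f)))
    (L : ℤ → ℝ) (c : ℝ) (hc : c < lam * pmin)
    (hlim : ∀ k ∈ Finset.Icc (1 : ℤ) (N : ℤ),
      Filter.Tendsto (fun u : ℝ => f k u / u) (nhdsWithin 0 {(0 : ℝ)}ᶜ) (nhds (L k)))
    (hLc : ∀ k ∈ Finset.Icc (1 : ℤ) (N : ℤ), L k ≤ c) :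
    ∃ δ : ℝ, 0 < δ ∧
      (∀ v : Fin N → ℝ, normE N v ≤ δ →
        (lam * pmin - c) / 4 * (normE N v) ^ 2 ≤ Jfun n N p (Ffun f) v) ∧
      (∀ v : Fin N → ℝ, normE N v = δ → 0 < Jfun n N p (Ffun f) v) := by
  set ε := (lam * pmin - c) / 2 with hεdef
  have hεpos : 0 < ε := by simp only [hεdef]; linarith
  set M := c + ε with hMdef
  -- uniform smallness radius
  have hev : ∀ᶠ u in nhdsWithin (0:ℝ) {(0:ℝ)}ᶜ,
      ∀ k ∈ Finset.Icc (1:ℤ) (N:ℤ), f k u / u ≤ M := by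
    rw [Filter.eventually_all_finset]
    intro k hk
    have h1 : ∀ᶠ u in nhdsWithin (0:ℝ) {(0:ℝ)}ᶜ, f k u / u < L k + ε :=
      (hlim k hk).eventually_lt_const (by linarith)
    filter_upwards [h1] with u hu
    have := hLc k hk
    simp only [hMdef]
    linarith
  obtain ⟨δ0, hδ0pos, hδ0⟩ := Metric.mem_nhdsWithin_iff.mp hev
  have hmain : ∀ v : Fin N → ℝ, normE N v ≤ δ0 / 2 →
      (lam * pmin - c) / 4 * (normE N v) ^ 2 ≤ Jfun n N p (Ffun f) v := by
    intro v hv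
    set E := extendE N v with hE
    set S := ∑ k ∈ Finset.Icc (1:ℤ) (N:ℤ), (E k)^2 with hS
    have hSnn : 0 ≤ S := Finset.sum_nonneg fun k _ => sq_nonneg _
    have hnorm : normE N v = Real.sqrt S := rfl
    have hnormsq : (normE N v)^2 = S := by rw [hnorm, Real.sq_sqrt hSnn]
    -- each coordinate is small
    have hcoord : ∀ k ∈ Finset.Icc (1:ℤ) (N:ℤ), |E k| ≤ δ0 / 2 := by
      intro k hk
      have h1 : (E k)^2 ≤ S :=
        Finset.single_le_sum (fun i _ => sq_nonneg (E i)) hk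
      have h2 : |E k| = Real.sqrt ((E k)^2) := (Real.sqrt_sq_eq_abs _).symm
      rw [h2]
      calc Real.sqrt ((E k)^2) ≤ Real.sqrt S := Real.sqrt_le_sqrt h1
        _ = normE N v := hnorm.symm
        _ ≤ δ0 / 2 := hv
    -- F bound on coordinates
    have hFb : ∀ k ∈ Finset.Icc (1:ℤ) (N:ℤ), Ffun f k (E k) ≤ M / 2 * (E k)^2 := by
      intro k hk
      apply int_bound (f k) (hf k) (hf0 k) M (δ0 / 2) (E k) (hcoord k hk)
      intro u hu0 huδ
      have hd : dist u 0 < δ0 := by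
        rw [Real.dist_eq, sub_zero]
        linarith
      exact hδ0 ⟨Metric.mem_ball.mpr hd, hu0⟩ k hk
    -- sum over the big interval equals sum over [1,N] for F
    have hsub : Finset.Icc (1:ℤ) (N:ℤ) ⊆ Finset.Icc (1 - (n:ℤ)) (N:ℤ) := by
      apply Finset.Icc_subset_Icc _ le_rfl
      have : (1:ℤ) ≤ n := by exact_mod_cast hn
      linarith
    have hzero : ∀ k ∈ Finset.Icc (1 - (n:ℤ)) (N:ℤ), k ∉ Finset.Icc (1:ℤ) (N:ℤ) →
        Ffun f k (E k) = 0 := by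
      intro k hk hk'
      have hkN : k ≤ (N:ℤ) := (Finset.mem_Icc.mp hk).2
      have hk1 : k < 1 := by
        by_contra h
        exact hk' (Finset.mem_Icc.mpr ⟨le_of_not_gt h, hkN⟩)
      have hEk : E k = 0 := by
        simp only [hE, extendE]
        rw [dif_neg]
        rintro ⟨h1, -⟩
        omega
      rw [hEk]
      simp [Ffun]
    have hFsum : ∑ k ∈ Finset.Icc (1 - (n:ℤ)) (N:ℤ), Ffun f k (E k)
        = ∑ k ∈ Finset.Icc (1:ℤ) (N:ℤ), Ffun f k (E k) :=
      (Finset.sum_subset hsub hzero).symm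
    have hFtot : ∑ k ∈ Finset.Icc (1 - (n:ℤ)) (N:ℤ), Ffun f k (E k) ≤ M / 2 * S := by
      rw [hFsum, hS, Finset.mul_sum]
      exact Finset.sum_le_sum hFb
    -- kinetic part
    have hkin : pmin / 2 * ∑ k ∈ Finset.Icc (1 - (n:ℤ)) (N:ℤ), (dd^[n] E k)^2
        ≤ ∑ k ∈ Finset.Icc (1 - (n:ℤ)) (N:ℤ), (1/2 : ℝ) * p k * (dd^[n] E k)^2 := by
      rw [Finset.mul_sum]
      apply Finset.sum_le_sum
      intro k hk
      have := hp k hk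
      nlinarith [sq_nonneg (dd^[n] E k)]
    have hpo := hpoin v
    have hJ : Jfun n N p (Ffun f) v
        = (∑ k ∈ Finset.Icc (1 - (n:ℤ)) (N:ℤ), (1/2 : ℝ) * p k * (dd^[n] E k)^2)
          - ∑ k ∈ Finset.Icc (1 - (n:ℤ)) (N:ℤ), Ffun f k (E k) := by
      simp only [Jfun, Finset.sum_sub_distrib, hE]
    have hD : pmin / 2 * (lam * S)
        ≤ pmin / 2 * ∑ k ∈ Finset.Icc (1 - (n:ℤ)) (N:ℤ), (dd^[n] E k)^2 := by
      apply mul_le_mul_of_nonneg_left _ (by linarith)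
      exact hpo
    rw [hJ, hnormsq]
    have hMval : lam * pmin - M = ε := by simp only [hMdef, hεdef]; ring
    nlinarith
  refine ⟨δ0 / 2, by linarith, hmain, ?_⟩
  intro v hv
  have := hmain v (le_of_eq hv)
  rw [hv] at this
  have h2 : 0 < (δ0 / 2) ^ 2 := by positivity
  nlinarith
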